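/- Let r₁ < ⋯ < r_k be positive integers and n > r_k² with gcd(n, gcd(r₁,…,r_k)) = 1, and let M_n = ⟨n, n+r₁, …, n+r_k⟩. If a⃗ and b⃗ are factorizations of the same element m ∈ M_n with |a⃗| < |b⃗|, then there exists a factorization b⃗′ of m with |b⃗′| = |b⃗| whose coordinate corresponding to the generator n is positive. -/

import Mathlib

open scoped Classical

/-- Membership in the additive submonoid of `ℕ` generated by `r 0, …, r (k-1)`. -/
def memGen {k : ℕ} (r : Fin k → ℕ) (a : ℕ) : Prop :=
  ∃ z : Fin k → ℕ, a = ∑ i, z i * r i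

/-- The Apéry set `Ap(S; x) = {m ∈ S : m - x ∉ S}` (subtraction in `ℤ`,
encoded by the guard `x ≤ m`). -/
def aperySet {k : ℕ} (r : Fin k → ℕ) (x : ℕ) : Set ℕ :=
  {m | memGen r m ∧ ¬(x ≤ m ∧ memGen r (m - x))}

/-- The set of factorization lengths of `a` in the monoid generated by `r`. -/
def lenSet {k : ℕ} (r : Fin k → ℕ) (a : ℕ) : Set ℕ :=
  {ℓ | ∃ z : Fin k → ℕ, a = ∑ i, z i * r i ∧ ℓ = ∑ i, z i}

/-- The minimum factorization length of `a` in the monoid generated by `r`. -/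
noncomputable def minLen {k : ℕ} (r : Fin k → ℕ) (a : ℕ) : ℕ :=
  sInf (lenSet r a)

/-- The generators `n, n + r 0, …, n + r (k-1)` of the shifted monoid `M_n`. -/
def shiftGen {k : ℕ} (n : ℕ) (r : Fin k → ℕ) : Fin (k + 1) → ℕ :=
  Fin.cons n (fun i => n + r i)

/-- The genus: the number of gaps of the monoid generated by `r`. -/
noncomputable def genus {k : ℕ} (r : Fin k → ℕ) : ℕ :=
  Set.ncard {m : ℕ | ¬ memGen r m}

/-- The Frobenius number: the largest gap of the monoid generated by `r`. -/
noncomputable def frob {k : ℕ} (r : Fin k → ℕ) : ℕ :=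
  sSup {m : ℕ | ¬ memGen r m}

/-- The set of pseudo-Frobenius numbers of the monoid generated by `r`. -/
def pseudoFrob {k : ℕ} (r : Fin k → ℕ) : Set ℕ :=
  {m | ¬ memGen r m ∧ ∀ x : ℕ, memGen r x → 0 < x → memGen r (m + x)}


section MesaAux

/-- Bounds on the sum of a list of naturals all in `[1, R)`. -/
lemma mesa_list_sum_bounds (R : ℕ) :
    ∀ L : List ℕ, (∀ x ∈ L, 0 < x ∧ x < R) →
      L.length ≤ L.sum ∧ L.sum + L.length ≤ L.length * R := by
  intro L
  induction L with
  | nil => simp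
  | cons x t ih =>
    intro h
    have hx := h x (by simp)
    have ht := ih (fun y hy => h y (by simp [hy]))
    have : (t.length + 1) * R = t.length * R + R := by ring
    simp only [List.sum_cons, List.length_cons]
    omega

/-- Pigeonhole: a list of at least `R` naturals in `[1, R)` has a consecutive
block whose sum is a positive multiple `d * R` with `d` less than the block length. -/
lemma mesa_exists_block (R : ℕ) (hR : 0 < R) (l : List ℕ)
    (hlen : R ≤ l.length) (hmem : ∀ x ∈ l, 0 < x ∧ x < R) :
    ∃ a c d : ℕ, a < c ∧ c ≤ R ∧ 0 < d ∧ d < c - a ∧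
      ((l.take c).drop a).sum = d * R := by
  haveI : NeZero R := ⟨hR.ne'⟩
  obtain ⟨i, j, hij, hfe⟩ := Fintype.exists_ne_map_eq_of_card_lt
    (fun t : Fin (R + 1) => (((l.take (t : ℕ)).sum : ℕ) : ZMod R))
    (by simp [ZMod.card])
  have key : ∃ p q : Fin (R + 1), p < q ∧
      (((l.take (p : ℕ)).sum : ℕ) : ZMod R) = ((l.take (q : ℕ)).sum : ℕ) := by
    rcases hij.lt_or_gt with h | h
    exacts [⟨i, j, h, hfe⟩, ⟨j, i, h, hfe.symm⟩]
  obtain ⟨p, q, hpq, hsum⟩ := key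
  set a := (p : ℕ) with ha
  set c := (q : ℕ) with hc
  have hac : a < c := hpq
  have hcR : c ≤ R := Nat.lt_succ_iff.mp q.isLt
  have hdecomp : (l.take c).sum = (l.take a).sum + ((l.take c).drop a).sum := by
    conv_lhs => rw [← List.take_append_drop a (l.take c)]
    rw [List.sum_append, List.take_take, min_eq_left hac.le]
  set blk := (l.take c).drop a with hblk
  have hmod : ((blk.sum : ℕ) : ZMod R) = 0 := by
    have h2 : (((l.take a).sum : ℕ) : ZMod R) + (blk.sum : ℕ)
        = ((l.take a).sum : ℕ) + 0 := by
      rw [add_zero, ← Nat.cast_add, ← hdecomp, hsum]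
    exact add_left_cancel h2
  obtain ⟨d, hd⟩ := (ZMod.natCast_eq_zero_iff _ _).mp hmod
  have hblklen : blk.length = c - a := by
    rw [hblk, List.length_drop, List.length_take, min_eq_left (hcR.trans hlen)]
  have hblkmem : ∀ x ∈ blk, 0 < x ∧ x < R := by
    intro x hx
    exact hmem x (List.mem_of_mem_take (List.mem_of_mem_drop hx))
  obtain ⟨hlow, hhigh⟩ := mesa_list_sum_bounds R blk hblkmem
  rw [hblklen] at hlow hhigh
  have hdpos : 0 < d := by
    rcases Nat.eq_zero_or_pos d with h0 | h0
    · rw [h0, Nat.mul_zero] at hd; omega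
    · exact h0
  have hdlt : d < c - a := by
    by_contra hge
    push_neg at hge
    have h1 : (c - a) * R ≤ d * R := Nat.mul_le_mul_right R hge
    rw [Nat.mul_comm d R, ← hd] at h1
    omega
  exact ⟨a, c, d, hac, hcR, hdpos, hdlt, by rw [hd]; ring⟩

variable {k : ℕ} (r : Fin (k + 1) → ℕ)

/-- Conversion: counting indices gives the mapped sum and the cardinality. -/
lemma mesa_count_sum (S : Multiset (Fin (k + 1))) :
    (∑ i, S.count i * r i = (S.map r).sum) ∧ (∑ i, S.count i = Multiset.card S) := by
  classical
  induction S using Multiset.induction_on with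
  | empty => simp
  | cons x S ih =>
    obtain ⟨ih1, ih2⟩ := ih
    constructor
    · simp only [Multiset.count_cons, Multiset.map_cons, Multiset.sum_cons, add_mul,
        ite_mul, one_mul, zero_mul, Finset.sum_add_distrib, ih1,
        Finset.sum_ite_eq' Finset.univ x r, Finset.mem_univ, if_true]
      exact add_comm _ _
    · simp only [Multiset.count_cons, Finset.sum_add_distrib, ih2,
        Finset.sum_ite_eq' Finset.univ x (fun _ => 1), Finset.mem_univ, if_true,
        Multiset.card_cons]

/-- Reduction: any multiset of generator indices can be replaced by one with the
same value, no larger cardinality, and fewer than `r (Fin.last k)` non-top indices. -/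
lemma mesa_red (hmono : StrictMono r) (hpos : 0 < r 0) :
    ∀ (N : ℕ) (S : Multiset (Fin (k + 1))), Multiset.card S ≤ N →
      ∃ T : Multiset (Fin (k + 1)),
        (T.map r).sum = (S.map r).sum ∧ Multiset.card T ≤ Multiset.card S ∧
        Multiset.card (T.filter (fun i => ¬ i = Fin.last k)) < r (Fin.last k) := by
  classical
  have hR : 0 < r (Fin.last k) := hpos.trans_le (hmono.monotone (Fin.zero_le _))
  intro N
  induction N with
  | zero =>
    intro S hS
    have : S = 0 := Multiset.card_eq_zero.mp (Nat.le_zero.mp hS)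
    exact ⟨0, by simp [this], by simp, by simpa using hR⟩
  | succ N ih =>
    intro S hS
    by_cases hF : Multiset.card (S.filter (fun i => ¬ i = Fin.last k)) < r (Fin.last k)
    · exact ⟨S, rfl, le_rfl, hF⟩
    push_neg at hF
    set K := Fin.last k with hK
    set R := r K with hRdef
    set F := S.filter (fun i => ¬ i = K) with hFdef
    set l := F.toList with hl
    have hlcoe : (l : Multiset (Fin (k + 1))) = F := F.coe_toList
    have hllen : l.length = Multiset.card F := by
      rw [← Multiset.coe_card, hlcoe]
    have hlen : R ≤ (l.map r).length := by
      rw [List.length_map, hllen]; exact hF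
    have hmem' : ∀ y ∈ l.map r, 0 < y ∧ y < R := by
      intro y hy
      obtain ⟨x, hx, rfl⟩ := List.mem_map.mp hy
      have hxF : x ∈ F := by rw [← hlcoe]; exact hx
      have hxne : ¬ x = K := (Multiset.mem_filter.mp hxF).2
      have hxlt : x < K := lt_of_le_of_ne (Fin.le_last x) hxne
      exact ⟨hpos.trans_le (hmono.monotone (Fin.zero_le x)), hmono hxlt⟩
    obtain ⟨a, c, d, hac, hcR, hd0, hdlt, hbsum⟩ := mesa_exists_block R hR (l.map r) hlen hmem'
    have hmapblk : ((l.map r).take c).drop a = ((l.take c).drop a).map r := by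
      rw [← List.map_take, ← List.map_drop]
    set u : Multiset (Fin (k + 1)) := (↑((l.take c).drop a) : Multiset (Fin (k + 1))) with hu
    have husum : (u.map r).sum = d * R := by
      rw [hu, Multiset.map_coe, Multiset.sum_coe, ← hmapblk]
      exact hbsum
    have hsub : ((l.take c).drop a).Sublist l :=
      ((l.take c).drop_sublist a).trans (l.take_sublist c)
    have hule : u ≤ S := by
      have h1 : u ≤ (l : Multiset (Fin (k + 1))) := Multiset.coe_le.mpr hsub.subperm
      rw [hlcoe] at h1
      exact h1.trans (Multiset.filter_le _ S)
    have hucard : Multiset.card u = c - a := by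
      rw [hu, Multiset.coe_card, List.length_drop, List.length_take,
        min_eq_left]
      calc c ≤ R := hcR
        _ ≤ (l.map r).length := hlen
        _ = l.length := List.length_map _
    set T0 := (S - u) + Multiset.replicate d K with hT0
    have hSdec : (S - u) + u = S := tsub_add_cancel_of_le hule
    have hT0sum : (T0.map r).sum = (S.map r).sum := by
      conv_rhs => rw [← hSdec]
      rw [hT0, Multiset.map_add, Multiset.sum_add, Multiset.map_add, Multiset.sum_add,
        husum, Multiset.map_replicate, Multiset.sum_replicate, smul_eq_mul]
    have hcards : Multiset.card (S - u) + Multiset.card u = Multiset.card S := by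
      rw [← Multiset.card_add, hSdec]
    have hT0card : Multiset.card T0 < Multiset.card S := by
      rw [hT0, Multiset.card_add, Multiset.card_replicate]
      omega
    obtain ⟨T, h1, h2, h3⟩ := ih T0 (by omega)
    exact ⟨T, h1.trans hT0sum, h2.trans hT0card.le, h3⟩

end MesaAux

/-- For `r₁ < ⋯ < r_k` positive, `n > r_k²`, `gcd(n, gcd(r₁,…,r_k)) = 1`,
and `M_n = ⟨n, n+r₁,…,n+r_k⟩`: if `a` and `b` are factorizations of the same `m ∈ M_n`
with `|a| < |b|`, then some factorization `b'` of `m` with `|b'| = |b|` has positive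
coordinate on the generator `n`. -/
theorem mesa_lemma {k : ℕ} (r : Fin (k + 1) → ℕ)
    (hmono : StrictMono r) (hpos : 0 < r 0)
    (n : ℕ) (hn : n > (r (Fin.last k)) ^ 2)
    (hgcd : Nat.gcd n (Finset.univ.gcd r) = 1)
    (m : ℕ) (a b : Fin (k + 2) → ℕ)
    (ha : m = ∑ j, a j * shiftGen n r j)
    (hb : m = ∑ j, b j * shiftGen n r j)
    (hab : ∑ j, a j < ∑ j, b j) :
    ∃ b' : Fin (k + 2) → ℕ,
      m = ∑ j, b' j * shiftGen n r j ∧ (∑ j, b' j) = ∑ j, b j ∧ 0 < b' 0 := by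
  
  classical
  by_cases hb0 : 0 < b 0
  · exact ⟨b, hb, rfl, hb0⟩
  push_neg at hb0
  have hb00 : b 0 = 0 := Nat.le_zero.mp hb0
  have hR : 0 < r (Fin.last k) := hpos.trans_le (hmono.monotone (Fin.zero_le _))
  have hsplit : ∀ c : Fin (k + 2) → ℕ,
      ∑ j, c j * shiftGen n r j = (∑ j, c j) * n + ∑ i : Fin (k + 1), c i.succ * r i := by
    intro c
    rw [Fin.sum_univ_succ (f := fun j => c j * shiftGen n r j), Fin.sum_univ_succ (f := c)]
    simp only [shiftGen, Fin.cons_zero, Fin.cons_succ, Nat.mul_add, add_mul,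
      Finset.sum_add_distrib, Finset.sum_mul]
    ring
  set A := ∑ j, a j with hA
  set B := ∑ j, b j with hB
  set sa := ∑ i : Fin (k + 1), a i.succ * r i with hsa
  set sb := ∑ i : Fin (k + 1), b i.succ * r i with hsbd
  have hma : m = A * n + sa := by rw [ha, hsplit]
  have hmb : m = B * n + sb := by rw [hb, hsplit]
  set A' := ∑ i : Fin (k + 1), a i.succ with hA'
  have hAA' : A = a 0 + A' := Fin.sum_univ_succ a
  have hBB' : B = ∑ i : Fin (k + 1), b i.succ := by
    rw [hB, Fin.sum_univ_succ b, hb00, zero_add]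
  have hnsb : n + sb ≤ sa := by
    have h2 : A * n + sa = B * n + sb := by rw [← hma, ← hmb]
    have h1 : A * n + n ≤ B * n := by
      have h3 : (A + 1) * n ≤ B * n := mul_le_mul_left (by omega) n
      rwa [add_mul, one_mul] at h3
    linarith
  have hsaR : sa ≤ A' * r (Fin.last k) := by
    calc sa ≤ ∑ i : Fin (k + 1), a i.succ * r (Fin.last k) :=
          Finset.sum_le_sum (fun i _ => Nat.mul_le_mul_left _ (hmono.monotone (Fin.le_last i)))
      _ = A' * r (Fin.last k) := by rw [← Finset.sum_mul]
  have hA'B : A' < B := by omega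
  set Sb : Multiset (Fin (k + 1)) := ∑ i : Fin (k + 1), Multiset.replicate (b i.succ) i with hSbd
  have hcount : ∀ j, Sb.count j = b j.succ := by
    intro j
    rw [hSbd, Multiset.count_sum']
    simp [Multiset.count_replicate]
  have hSbsum : (Sb.map r).sum = sb := by
    rw [← (mesa_count_sum r Sb).1]
    exact Finset.sum_congr rfl fun i _ => by rw [hcount]
  have hSbcard : Multiset.card Sb = B := by
    rw [← (mesa_count_sum r Sb).2, hBB']
    exact Finset.sum_congr rfl fun i _ => hcount i
  obtain ⟨T, hT1, hT2, hT3⟩ := mesa_red r hmono hpos (Multiset.card Sb) Sb le_rfl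
  have hc12 : Multiset.card (T.filter (fun i => i = Fin.last k))
      + Multiset.card (T.filter (fun i => ¬ i = Fin.last k)) = Multiset.card T := by
    rw [← Multiset.card_add, Multiset.filter_add_not]
  have hc1R : Multiset.card (T.filter (fun i => i = Fin.last k)) * r (Fin.last k) ≤ sb := by
    have hdec : T.filter (fun i => i = Fin.last k) + T.filter (fun i => ¬ i = Fin.last k) = T :=
      Multiset.filter_add_not _ T
    have hsum2 : (T.map r).sum = ((T.filter (fun i => i = Fin.last k)).map r).sum
        + ((T.filter (fun i => ¬ i = Fin.last k)).map r).sum := by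
      conv_lhs => rw [← hdec]
      rw [Multiset.map_add, Multiset.sum_add]
    have hrep : (T.filter (fun i => i = Fin.last k)).map r
        = Multiset.replicate (Multiset.card (T.filter (fun i => i = Fin.last k))) (r (Fin.last k)) := by
      apply Multiset.eq_replicate.mpr
      refine ⟨by rw [Multiset.card_map], ?_⟩
      intro y hy
      obtain ⟨x, hx, rfl⟩ := Multiset.mem_map.mp hy
      rw [(Multiset.mem_filter.mp hx).2]
    have : (T.map r).sum = sb := by rw [hT1, hSbsum]
    rw [hsum2, hrep, Multiset.sum_replicate, smul_eq_mul] at this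
    omega
  have hRR : r (Fin.last k) * r (Fin.last k) < n := by
    have := hn; rw [pow_two] at this; exact this
  have hkey : Multiset.card (T.filter (fun i => i = Fin.last k)) + r (Fin.last k) < A' := by
    have h1 : (Multiset.card (T.filter (fun i => i = Fin.last k)) + r (Fin.last k)) * r (Fin.last k)
        < A' * r (Fin.last k) := by
      calc (Multiset.card (T.filter (fun i => i = Fin.last k)) + r (Fin.last k)) * r (Fin.last k)
          = Multiset.card (T.filter (fun i => i = Fin.last k)) * r (Fin.last k)
            + r (Fin.last k) * r (Fin.last k) := by ring
        _ ≤ sb + r (Fin.last k) * r (Fin.last k) := by omega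
        _ < sb + n := by omega
        _ ≤ sa := by omega
        _ ≤ A' * r (Fin.last k) := hsaR
    exact Nat.lt_of_mul_lt_mul_right h1
  have hTB : Multiset.card T < B := by
    rw [hSbcard] at hT2
    omega
  refine ⟨Fin.cons (B - Multiset.card T) (fun i => T.count i), ?_, ?_, ?_⟩
  · rw [hsplit]
    have hs1 : ∑ j, (Fin.cons (B - Multiset.card T) (fun i => T.count i) : Fin (k + 2) → ℕ) j
        = B := by
      rw [Fin.sum_univ_succ]
      simp only [Fin.cons_zero, Fin.cons_succ]
      rw [(mesa_count_sum r T).2]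
      omega
    have hs2 : ∑ i : Fin (k + 1),
        (Fin.cons (B - Multiset.card T) (fun i => T.count i) : Fin (k + 2) → ℕ) i.succ * r i
        = sb := by
      simp only [Fin.cons_succ]
      rw [(mesa_count_sum r T).1, hT1, hSbsum]
    rw [hs1, hs2, ← hmb]
  · rw [Fin.sum_univ_succ]
    simp only [Fin.cons_zero, Fin.cons_succ]
    rw [(mesa_count_sum r T).2]
    omega
  · simp only [Fin.cons_zero]
    omega
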